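/- Let G be a finite group, L a finite G-lattice with a family of nonempty sublattices L_H as in the lattice Burnside ring setting, and let (U,t),(K₁,s₁),(K₂,s₂) ∈ S(G,M_L). For i = 1,2 set Hom_i = {g_iK_i ∈ G/K_i : U ≤ {}^{g_i}K_i and t ≤ {}^{g_i}s_i}. Then the map Φ : Hom₁ × Hom₂ → ⊔_{K₁rK₂ ∈ K₁\G/K₂} {gK ∈ G/(K₁∩ʳK₂) : U ≤ ᵍ(K₁∩ʳK₂) and t ≤ ᵍ(s₁ ∧ ʳs₂)}, sending (g₁K₁, g₂K₂) to g₁r₁(K₁∩ʳK₂) in the component indexed by the double coset K₁rK₂ with g₁⁻¹g₂K₂ = r₁rK₂ and r₁ ∈ K₁, is a well-defined bijection, and it is equivariant for the action of W_G(U,t) in which the class of g ∈ N_G(U,t) sends each coset hK to g⁻¹hK. Consequently, for every (U,t) ∈ S(G,M_L), the map ω sending [(G/K)_s] to the class of the W_G(U,t)-set {gK ∈ G/K : U ≤ ᵍK and t ≤ ᵍs} extends to a ring homomorphism from Ω(G,M_L) to the Burnside ring of W_G(U,t). -/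

import Mathlib

set_option linter.unusedSectionVars false
set_option linter.unusedVariables false

open scoped Classical

namespace LB
noncomputable section

variable {G : Type*} [Group G]

/-- The conjugate subgroup `ᵍK = gKg⁻¹`. -/
def conjS (g : G) (K : Subgroup G) : Subgroup G :=
  K.map ((MulAut.conj g).toMonoidHom)

theorem mem_conjS {g x : G} {K : Subgroup G} : x ∈ conjS g K ↔ g⁻¹ * x * g ∈ K := by
  unfold conjS
  rw [Subgroup.mem_map]
  constructor
  · rintro ⟨y, hy, rfl⟩
    have h2 : g⁻¹ * ((MulAut.conj g).toMonoidHom y) * g = y := by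
      simp only [MulEquiv.coe_toMonoidHom, MulAut.conj_apply]; group
    rw [h2]; exact hy
  · intro h
    refine ⟨g⁻¹ * x * g, h, ?_⟩
    simp only [MulEquiv.coe_toMonoidHom, MulAut.conj_apply]; group

theorem conjS_mono (g : G) {K K' : Subgroup G} (h : K ≤ K') : conjS g K ≤ conjS g K' :=
  Subgroup.map_mono h

theorem conjS_one (K : Subgroup G) : conjS 1 K = K := by
  ext x; simp [mem_conjS]

theorem conjS_mul (g r : G) (K : Subgroup G) : conjS g (conjS r K) = conjS (g * r) K := by
  ext x
  rw [mem_conjS, mem_conjS, mem_conjS,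
    show r⁻¹ * (g⁻¹ * x * g) * r = (g * r)⁻¹ * x * (g * r) by group]

/-- The Möbius function of a finite partial order. -/
def mob {α : Type*} [PartialOrder α] [Finite α] (a b : α) : ℤ :=
  letI : Fintype α := Fintype.ofFinite α
  letI : @DecidableRel α α (· < ·) := Classical.decRel _
  letI : LocallyFiniteOrder α := Fintype.toLocallyFiniteOrder
  IncidenceAlgebra.mu ℤ a b

/-- A family of nonempty sublattices `L_H ⊆ L` of a finite `G`-lattice `L`
(for `H ≤ G`) satisfying the conditions of Proposition 4.2 of the paper; the binary
relation of `L` is required to be invariant under `G` (field `smul_le`).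
The data `top K` is the greatest element `sup L_K` of the sublattice `L_K`. -/
structure SubLatticeFamily (G : Type*) [Group G] (L : Type*) [Lattice L] [MulAction G L] where
  smul_le : ∀ (g : G) (x y : L), x ≤ y → g • x ≤ g • y
  S : Subgroup G → Set L
  nonempty : ∀ K, (S K).Nonempty
  inf_mem : ∀ (K : Subgroup G) {a b : L}, a ∈ S K → b ∈ S K → a ⊓ b ∈ S K
  sup_mem : ∀ (K : Subgroup G) {a b : L}, a ∈ S K → b ∈ S K → a ⊔ b ∈ S K
  top : Subgroup G → L
  top_mem : ∀ K, top K ∈ S K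
  le_top : ∀ K, ∀ a ∈ S K, a ≤ top K
  conj_eq : ∀ (g : G) (H : Subgroup G), S (conjS g H) = (g • ·) '' S H
  invariant : ∀ (H : Subgroup G), ∀ h ∈ H, ∀ s ∈ S H, h • s = s
  res_mem : ∀ {K H : Subgroup G}, K ≤ H → ∀ s ∈ S H, s ⊓ top K ∈ S K
  top_mono : ∀ {K H : Subgroup G}, K ≤ H → top K ≤ top H

variable {L : Type*} [Lattice L] [MulAction G L]

/-- The action of `G` on pairs `(K, s)`. -/
def dotL (g : G) (x : Subgroup G × L) : Subgroup G × L := (conjS g x.1, g • x.2)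

theorem dotL_one (x : Subgroup G × L) : dotL (1 : G) x = x := by
  simp [dotL, conjS_one]

theorem dotL_mul (g r : G) (x : Subgroup G × L) : dotL g (dotL r x) = dotL (g * r) x := by
  simp [dotL, conjS_mul, mul_smul]

variable (F : SubLatticeFamily G L)

/-- `(K,s) ∈ S(H, M_L)`: the pairs `(K,s)` with `K ≤ H` and `s ∈ L_K`. -/
def memS (H : Subgroup G) (x : Subgroup G × L) : Prop := x.1 ≤ H ∧ x.2 ∈ F.S x.1

/-- `N_H(K,s)`, the stabilizer in `H` of the pair `(K,s)`. -/
def NL (H : Subgroup G) (x : Subgroup G × L) : Subgroup G where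
  carrier := {g | g ∈ H ∧ dotL g x = x}
  one_mem' := ⟨H.one_mem, dotL_one x⟩
  mul_mem' := by
    rintro a b ⟨ha, da⟩ ⟨hb, db⟩
    exact ⟨H.mul_mem ha hb, by rw [← dotL_mul, db, da]⟩
  inv_mem' := by
    rintro a ⟨ha, da⟩
    refine ⟨H.inv_mem ha, ?_⟩
    conv_lhs => rw [← da]
    rw [dotL_mul, inv_mul_cancel, dotL_one]

/-- `|W_H(K,s)| = |N_H(K,s)/K|`. -/
def WCardL (H : Subgroup G) (x : Subgroup G × L) : ℕ := (x.1.subgroupOf (NL H x)).index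

/-- A complete set of representatives `R(H, M_L)` of the `H`-orbits of `S(H, M_L)`. -/
structure RepsL (F : SubLatticeFamily G L) (H : Subgroup G) where
  R : Set (Subgroup G × L)
  subset : ∀ x ∈ R, memS F H x
  complete : ∀ x, memS F H x → ∃! y, y ∈ R ∧ ∃ h ∈ H, dotL h x = y

variable {H : Subgroup G}

/-- The coordinate of a tuple indexed by a set of representatives at (the orbit of) an
arbitrary pair. -/
def coordAtL {A : Type*} [AddCommMonoid A] (ι : Set (Subgroup G × L)) (H : Subgroup G)
    (v : ↥ι → A) (y : Subgroup G × L) : A :=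
  ∑ᶠ (k : ↥ι) (_ : ∃ h ∈ H, dotL h y = ↑k), v k

/-- The class `[(H/K)_s]` expressed with respect to a family indexed by a set of
representatives: it picks out the member of the family lying in the orbit of `(K,s)`. -/
def clsSumL {A : Type*} [AddCommMonoid A] (ι : Set (Subgroup G × L)) (H : Subgroup G)
    (e : ↥ι → A) (y : Subgroup G × L) : A :=
  coordAtL ι H e y

/-- `#{hK ∈ H/K : U ≤ ʰK and t ≤ ʰs}` for `x = (K,s)`, `u = (U,t)`. -/
def invCountLe (H : Subgroup G) (x u : Subgroup G × L) : ℕ :=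
  Nat.card {q : ↥H ⧸ x.1.subgroupOf H //
    ∃ h : ↥H, QuotientGroup.mk h = q ∧ u.1 ≤ conjS (h : G) x.1 ∧ u.2 ≤ (h : G) • x.2}

/-- `#{hK ∈ H/K : U ≤ ʰK and t = res_U(ʰs) = ʰs ∧ sup L_U}` for `x = (K,s)`, `u = (U,t)`. -/
def invCountEq (F : SubLatticeFamily G L) (H : Subgroup G) (x u : Subgroup G × L) : ℕ :=
  Nat.card {q : ↥H ⧸ x.1.subgroupOf H //
    ∃ h : ↥H, QuotientGroup.mk h = q ∧ u.1 ≤ conjS (h : G) x.1 ∧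
      u.2 = ((h : G) • x.2) ⊓ F.top u.1}

/-- The mark homomorphism `φ_H` (in coordinates w.r.t. the basis `[(H/K)_s]`). -/
def phiL (R : RepsL F H) (f : ↥R.R → ℤ) : ↥R.R → ℤ :=
  fun u => ∑ᶠ k : ↥R.R, f k * (invCountEq F H k.1 u.1 : ℤ)

/-- The map `α̃_H` of Theorem 4.10 (in coordinates). -/
def alphaTL (R : RepsL F H) (f : ↥R.R → ℤ) : ↥R.R → ℤ :=
  fun u => ∑ᶠ k : ↥R.R, f k * (invCountLe H k.1 u.1 : ℤ)

/-- The subgroup `⟨r⟩U` generated by `r` and `U`. -/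
def cyc (r : G) (U : Subgroup G) : Subgroup G := Subgroup.closure {r} ⊔ U

/-- The least element of `{s ∈ L_P : s ≥ t}` (junk value if there is none). -/
def leastGE [Nonempty L] (P : Subgroup G) (t : L) : L :=
  Classical.epsilon fun s => (s ∈ F.S P ∧ t ≤ s) ∧ ∀ s', s' ∈ F.S P ∧ t ≤ s' → s ≤ s'

/-- The order of a Sylow `p`-subgroup of a group of order `n`; for `p = 0`
(representing `p = ∞`) it is `n` itself. -/
def sylCard (p n : ℕ) : ℕ := if p = 0 then n else p ^ (n.factorization p)

/-- The multiplicative set `ℤ ∖ (p)` (for `p` prime), resp. the units of `ℤ` (for `p = 0`,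
representing `p = ∞`), so that `Localization (locMon p hp)` is `ℤ_(p)`, resp. `ℤ`. -/
def locMon (p : ℕ) (hp : p = 0 ∨ p.Prime) : Submonoid ℤ where
  carrier := {k | if p = 0 then IsUnit k else ¬ (p : ℤ) ∣ k}
  one_mem' := by
    rcases hp with h | h
    · simp [h]
    · simp only [Set.mem_setOf_eq, if_neg h.ne_zero]
      intro hd
      exact h.one_lt.ne' (by exact_mod_cast Int.eq_one_of_dvd_one (by positivity) hd)
  mul_mem' := by
    intro a b ha hb
    rcases hp with h | h
    · simp only [Set.mem_setOf_eq, if_pos h] at *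
      exact ha.mul hb
    · simp only [Set.mem_setOf_eq, if_neg h.ne_zero] at *
      intro hd
      rcases ((Nat.prime_iff_prime_int.mp h).dvd_mul.mp hd) with h1 | h1
      · exact ha h1
      · exact hb h1

/-- `ℤ_(p)` (with `ℤ_(0)` interpreted as `ℤ_(∞) = ℤ`). -/
abbrev Zp (p : ℕ) (hp : p = 0 ∨ p.Prime) := Localization (locMon p hp)



/-- The map `α_H^{(p)}`. -/
def alphaL {A : Type*} [AddCommMonoid A] [Finite L] (R : RepsL F H) (x : ↥R.R → A) :
    ↥R.R → A :=
  fun u => ∑ᶠ (s : L) (_ : s ∈ F.S u.1.1 ∧ u.1.2 ≤ s), coordAtL R.R H x (u.1.1, s)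

/-- The map `β_H^{(p)}`, defined via the Möbius functions of the posets `L_U`. -/
def betaL {A : Type*} [AddCommGroup A] [Finite L] (R : RepsL F H) (x : ↥R.R → A) :
    ↥R.R → A :=
  fun u => ∑ᶠ (s : L) (hs : s ∈ F.S u.1.1 ∧ u.1.2 ≤ s),
    mob (⟨u.1.2, (R.subset u.1 u.2).2⟩ : ↥(F.S u.1.1)) ⟨s, hs.1⟩ •
      coordAtL R.R H x (u.1.1, s)

variable (p : ℕ) (hp : p = 0 ∨ p.Prime)

/-- `Obs(H, M_L)_(p)`. -/
abbrev ObsL (R : RepsL F H) :=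
  ∀ u : ↥R.R, Zp p hp ⧸ Ideal.span {(sylCard p (WCardL H u.1) : Zp p hp)}

/-- The Cauchy–Frobenius map `ψ̃_H^{(p)}`; `P u` is the choice of the subgroup of
`N_H(U,t)` containing `U` with `(P u)/U` the Sylow `p`-subgroup `W_H(U,t)_p`. -/
def psiTL (R : RepsL F H) (P : ↥R.R → Subgroup G) (x : ↥R.R → Zp p hp) : ObsL F p hp R :=
  fun u => Ideal.Quotient.mk _ (∑ᶠ q : ↥(P u) ⧸ (u.1.1.subgroupOf (P u)),
    ∑ᶠ (s : L) (_ : s ∈ F.S (cyc ((Quotient.out q : ↥(P u)) : G) u.1.1) ∧ u.1.2 ≤ s),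
      coordAtL R.R H x (cyc ((Quotient.out q : ↥(P u)) : G) u.1.1, s))

/-- The map `β̃_H^{(p)}`. -/
def betaTL [Nonempty L] (R : RepsL F H) (P : ↥R.R → Subgroup G) (x : ↥R.R → Zp p hp) :
    ObsL F p hp R :=
  fun u => Ideal.Quotient.mk _ (∑ᶠ q : ↥(P u) ⧸ (u.1.1.subgroupOf (P u)),
    coordAtL R.R H x (cyc ((Quotient.out q : ↥(P u)) : G) u.1.1,
      leastGE F (cyc ((Quotient.out q : ↥(P u)) : G) u.1.1) u.1.2))

/-- `φ_H^{(p)}` with `ℤ_(p)`-coefficients. -/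
def phiLp (R : RepsL F H) (f : ↥R.R → Zp p hp) : ↥R.R → Zp p hp :=
  fun u => ∑ᶠ k : ↥R.R, f k * (invCountEq F H k.1 u.1 : Zp p hp)

/-- The pair `(K ∩ ʰU, res(s ∧ ʰt))` appearing in the product formula. -/
def prodPairL (h : G) (x y : Subgroup G × L) : Subgroup G × L :=
  (x.1 ⊓ conjS h y.1, (x.2 ⊓ h • y.2) ⊓ F.top (x.1 ⊓ conjS h y.1))
end

universe u v

noncomputable section

variable {G : Type u} [Group G] {L : Type v} [Lattice L] [MulAction G L]
variable (F : SubLatticeFamily G L)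

theorem mem_NL {H : Subgroup G} {x : Subgroup G × L} {g : G} :
    g ∈ NL H x ↔ g ∈ H ∧ dotL g x = x := Iff.rfl

/-- `U` (viewed inside `N_G(U,t)`) is normal in `N_G(U,t)`. -/
instance normal_NL (U : Subgroup G) (t : L) :
    (U.subgroupOf (NL (⊤ : Subgroup G) (U, t))).Normal := by
  constructor
  intro a ha n
  rw [Subgroup.mem_subgroupOf] at ha ⊢
  have hmem : (n : G) ∈ (⊤ : Subgroup G) ∧ dotL (n : G) ((U, t) : Subgroup G × L)
      = (U, t) := n.2
  have hn : conjS (n : G) U = U := congrArg Prod.fst hmem.2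
  have hmem2 : ((n * a * n⁻¹ : ↥(NL (⊤ : Subgroup G) (U, t))) : G) ∈ conjS (n : G) U := by
    rw [mem_conjS]
    push_cast
    have hsimp : (n : G)⁻¹ * ((n : G) * (a : G) * (n : G)⁻¹) * (n : G) = (a : G) := by group
    rw [hsimp]
    exact ha
  rwa [hn] at hmem2

/-- The group `W_G(U,t) = N_G(U,t)/U`. -/
abbrev WQ (U : Subgroup G) (t : L) :=
  ↥(NL (⊤ : Subgroup G) (U, t)) ⧸ (U.subgroupOf (NL (⊤ : Subgroup G) (U, t)))

/-- The action map of a (term-level) `MulAction` instance. -/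
def aSmul {W X : Type*} [Monoid W] (a : MulAction W X) (w : W) (x : X) : X :=
  @SMul.smul W X a.toSMul w x

def sumFt {X Y : Type*} (fX : Fintype X) (fY : Fintype Y) : Fintype (X ⊕ Y) := by
  letI := fX; letI := fY; exact inferInstance

def prodFt {X Y : Type*} (fX : Fintype X) (fY : Fintype Y) : Fintype (X × Y) := by
  letI := fX; letI := fY; exact inferInstance

def sumAct {W X Y : Type*} [Monoid W] (aX : MulAction W X) (aY : MulAction W Y) :
    MulAction W (X ⊕ Y) := by letI := aX; letI := aY; exact inferInstance

def prodAct {W X Y : Type*} [Monoid W] (aX : MulAction W X) (aY : MulAction W Y) :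
    MulAction W (X × Y) := by letI := aX; letI := aY; exact inferInstance

def punitFt : Fintype PUnit.{u + 1} := inferInstance

def punitAct (W : Type*) [Monoid W] : MulAction W PUnit.{u + 1} := inferInstance

/-- The condition defining the hom-set `Γ((G/U, π_t), (G/K, π_s))`, viewed as a set of
cosets `gK ∈ G/K`: `U ≤ ᵍK` and `t ≤ ᵍs`. -/
def homCond (U : Subgroup G) (t : L) (K : Subgroup G) (s : L) (q : G ⧸ K) : Prop :=
  ∃ g : G, QuotientGroup.mk g = q ∧ U ≤ conjS g K ∧ t ≤ g • s

/-- The hom-set `Γ((G/U, π_t), (G/K, π_s))` as a type. -/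
abbrev HomSet (U : Subgroup G) (t : L) (K : Subgroup G) (s : L) : Type u :=
  {q : G ⧸ K // homCond U t K s q}

/-- The target of the map `Φ`: the disjoint union over the double cosets
`K₁rK₂ ∈ K₁\G/K₂` of the coset spaces `G/(K₁ ∩ ʳK₂)`. -/
abbrev TgtT (K₁ K₂ : Subgroup G) :=
  (d : DoubleCoset.Quotient (K₁ : Set G) (K₂ : Set G)) ×
    (G ⧸ (K₁ ⊓ conjS (Quotient.out d) K₂))

/-- The map `Φ` of Corollary 5.7: it sends `(g₁K₁, g₂K₂)` to the coset
`g₁r₁(K₁ ∩ ʳK₂)` in the component indexed by the double coset `K₁rK₂` of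
`g₁⁻¹g₂`, where `g₁⁻¹g₂ = r₁ r k₂` with `r₁ ∈ K₁`, `k₂ ∈ K₂`. -/
def PhiMap (K₁ K₂ : Subgroup G) (x : (G ⧸ K₁) × (G ⧸ K₂)) : TgtT K₁ K₂ :=
  let g₁ := Quotient.out x.1
  let g₂ := Quotient.out x.2
  let d : DoubleCoset.Quotient (K₁ : Set G) (K₂ : Set G) := DoubleCoset.mk K₁ K₂ (g₁⁻¹ * g₂)
  let r := Quotient.out d
  let r₁ := Classical.epsilon
    (fun r₁ : G => r₁ ∈ K₁ ∧ ∃ k₂ ∈ K₂, g₁⁻¹ * g₂ = r₁ * r * k₂)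
  ⟨d, QuotientGroup.mk (g₁ * r₁)⟩


/-! ### Auxiliary lemmas -/

section Aux

variable {U K K' K₁ K₂ : Subgroup G} {t s s₁ s₂ : L}

theorem FA.smul_le_iff (F : SubLatticeFamily G L) (g : G) {a b : L} :
    g • a ≤ g • b ↔ a ≤ b := by
  refine ⟨fun h => ?_, F.smul_le g a b⟩
  have := F.smul_le g⁻¹ _ _ h
  simpa using this

theorem FA.smul_inf (F : SubLatticeFamily G L) (g : G) (a b : L) :
    g • (a ⊓ b) = g • a ⊓ g • b := by
  refine le_antisymm (le_inf (F.smul_le g _ _ inf_le_left) (F.smul_le g _ _ inf_le_right)) ?_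
  have h : g • a ⊓ g • b = g • (g⁻¹ • (g • a ⊓ g • b)) := by simp
  rw [h]
  refine F.smul_le g _ _ (le_inf ?_ ?_)
  · have := F.smul_le g⁻¹ _ _ (inf_le_left (a := g • a) (b := g • b)); simpa using this
  · have := F.smul_le g⁻¹ _ _ (inf_le_right (a := g • a) (b := g • b)); simpa using this

theorem conjS_inf (g : G) (A B : Subgroup G) :
    conjS g (A ⊓ B) = conjS g A ⊓ conjS g B := by
  ext x; simp [mem_conjS, Subgroup.mem_inf]

theorem conjS_self {k : G} (hk : k ∈ K) : conjS k K = K := by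
  ext x
  rw [mem_conjS]
  constructor
  · intro h
    have := K.mul_mem (K.mul_mem hk h) (K.inv_mem hk)
    simpa [mul_assoc] using this
  · intro h
    exact K.mul_mem (K.mul_mem (K.inv_mem hk) h) hk

theorem smul_mem_S (F : SubLatticeFamily G L) (g : G) (hs : s ∈ F.S K) :
    g • s ∈ F.S (conjS g K) := by
  rw [F.conj_eq]; exact ⟨s, hs, rfl⟩

theorem top_conjS (F : SubLatticeFamily G L) (g : G) (K : Subgroup G) :
    F.top (conjS g K) = g • F.top K := by
  refine le_antisymm ?_ (F.le_top _ _ (smul_mem_S F g (F.top_mem K)))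
  have h1 : F.top (conjS g K) ∈ F.S (conjS g K) := F.top_mem _
  rw [F.conj_eq] at h1
  obtain ⟨a, ha, hEq⟩ := h1
  rw [← hEq]
  exact F.smul_le g _ _ (F.le_top K a ha)

theorem homCond_mk_iff (F : SubLatticeFamily G L) (hs : s ∈ F.S K) (g : G) :
    homCond U t K s (QuotientGroup.mk g) ↔ U ≤ conjS g K ∧ t ≤ g • s := by
  constructor
  · rintro ⟨g', hg', hU, ht⟩
    have hk : g'⁻¹ * g ∈ K := QuotientGroup.eq.mp hg'
    have hgg : g = g' * (g'⁻¹ * g) := by group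
    constructor
    · rw [hgg, ← conjS_mul, conjS_self hk]; exact hU
    · have hss : g • s = g' • s := by
        rw [hgg, mul_smul, F.invariant K _ hk s hs]
      rw [hss]; exact ht
  · rintro ⟨hU, ht⟩
    exact ⟨g, rfl, hU, ht⟩

theorem homCond_out_iff (F : SubLatticeFamily G L) (hs : s ∈ F.S K) (q : G ⧸ K) :
    homCond U t K s q ↔ U ≤ conjS (Quotient.out q) K ∧ t ≤ (Quotient.out q) • s := by
  conv_lhs => rw [← QuotientGroup.out_eq' q]
  exact homCond_mk_iff F hs _

theorem doset_mk_eq {a b w : G} (ha : a ∈ K₁) (hb : b ∈ K₂) :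
    DoubleCoset.mk K₁ K₂ (a * w * b) = DoubleCoset.mk K₁ K₂ w := by
  rw [DoubleCoset.eq]
  exact ⟨a⁻¹, K₁.inv_mem ha, b⁻¹, K₂.inv_mem hb, by group⟩

/-- Sigma-extensionality for the target type. -/
theorem TgtT_mk_eq {d d' : DoubleCoset.Quotient (K₁ : Set G) (K₂ : Set G)} (h : d = d')
    (a b : G) (hab : a⁻¹ * b ∈ K₁ ⊓ conjS (Quotient.out d) K₂) :
    (⟨d, QuotientGroup.mk a⟩ : TgtT K₁ K₂) = ⟨d', QuotientGroup.mk b⟩ := by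
  subst h
  exact congrArg _ (QuotientGroup.eq.mpr hab)

end Aux

section Aux2

variable {U K₁ K₂ : Subgroup G} {t s₁ s₂ : L}

/-- The inverse of `PhiMap`. -/
def PsiMap (K₁ K₂ : Subgroup G) (y : TgtT K₁ K₂) : (G ⧸ K₁) × (G ⧸ K₂) :=
  (QuotientGroup.mk (Quotient.out y.2),
   QuotientGroup.mk (Quotient.out y.2 * Quotient.out y.1))

theorem PhiMap_eq (K₁ K₂ : Subgroup G) (x : (G ⧸ K₁) × (G ⧸ K₂)) :
    ∃ r₁ ∈ K₁, ∃ k₂ ∈ K₂,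
      (Quotient.out x.1)⁻¹ * Quotient.out x.2
        = r₁ * Quotient.out (DoubleCoset.mk K₁ K₂ ((Quotient.out x.1)⁻¹ * Quotient.out x.2)) * k₂ ∧
      PhiMap K₁ K₂ x = ⟨DoubleCoset.mk K₁ K₂ ((Quotient.out x.1)⁻¹ * Quotient.out x.2),
        QuotientGroup.mk (Quotient.out x.1 * r₁)⟩ := by
  have hex : ∃ r₁ : G, r₁ ∈ K₁ ∧ ∃ k₂ ∈ K₂,
      (Quotient.out x.1)⁻¹ * Quotient.out x.2 = r₁ *
        Quotient.out (DoubleCoset.mk K₁ K₂ ((Quotient.out x.1)⁻¹ * Quotient.out x.2)) * k₂ := by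
    have h0 : DoubleCoset.mk K₁ K₂
        (Quotient.out (DoubleCoset.mk K₁ K₂ ((Quotient.out x.1)⁻¹ * Quotient.out x.2)))
        = DoubleCoset.mk K₁ K₂ ((Quotient.out x.1)⁻¹ * Quotient.out x.2) :=
      DoubleCoset.out_eq' K₁ K₂ _
    obtain ⟨h, hh, k, hk, heq⟩ := (DoubleCoset.eq K₁ K₂ _ _).mp h0
    exact ⟨h, hh, k, hk, heq⟩
  have hspec := Classical.epsilon_spec hex
  obtain ⟨hk1, k₂, hk₂, hfact⟩ := hspec
  exact ⟨_, hk1, k₂, hk₂, hfact, rfl⟩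

theorem PsiMap_PhiMap (K₁ K₂ : Subgroup G) (x : (G ⧸ K₁) × (G ⧸ K₂)) :
    PsiMap K₁ K₂ (PhiMap K₁ K₂ x) = x := by
  obtain ⟨r₁, hr₁, k₂, hk₂, hfact, heq⟩ := PhiMap_eq K₁ K₂ x
  set g₁ := Quotient.out x.1 with hg₁
  set g₂ := Quotient.out x.2 with hg₂
  set d := DoubleCoset.mk K₁ K₂ (g₁⁻¹ * g₂) with hd
  rw [heq]
  set c0 := Quotient.out
    ((QuotientGroup.mk (g₁ * r₁)) : G ⧸ (K₁ ⊓ conjS (Quotient.out d) K₂)) with hc0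
  have hcm : c0⁻¹ * (g₁ * r₁) ∈ K₁ ⊓ conjS (Quotient.out d) K₂ :=
    QuotientGroup.eq.mp (QuotientGroup.out_eq' _)
  set c := c0⁻¹ * (g₁ * r₁) with hc
  have hc0eq : c0 = g₁ * r₁ * c⁻¹ := by rw [hc]; group
  have hcK₁ : c ∈ K₁ := hcm.1
  have hcK₂ : (Quotient.out d)⁻¹ * c * Quotient.out d ∈ K₂ := mem_conjS.mp hcm.2
  show ((QuotientGroup.mk c0 : G ⧸ K₁), (QuotientGroup.mk (c0 * Quotient.out d) : G ⧸ K₂)) = x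
  have h1 : (QuotientGroup.mk c0 : G ⧸ K₁) = x.1 := by
    rw [← QuotientGroup.out_eq' x.1, ← hg₁]
    apply QuotientGroup.eq.mpr
    have he : c0⁻¹ * g₁ = c * r₁⁻¹ := by rw [hc0eq]; group
    rw [he]
    exact K₁.mul_mem hcK₁ (K₁.inv_mem hr₁)
  have h2 : (QuotientGroup.mk (c0 * Quotient.out d) : G ⧸ K₂) = x.2 := by
    rw [← QuotientGroup.out_eq' x.2, ← hg₂]
    apply QuotientGroup.eq.mpr
    have hgg : g₂ = g₁ * (r₁ * Quotient.out d * k₂) := by rw [← hfact]; group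
    have he : (c0 * Quotient.out d)⁻¹ * g₂
        = ((Quotient.out d)⁻¹ * c * Quotient.out d) * k₂ := by
      rw [hc0eq, hgg]; group
    rw [he]
    exact K₂.mul_mem hcK₂ hk₂
  rw [h1, h2]

theorem PhiMap_PsiMap (K₁ K₂ : Subgroup G) (y : TgtT K₁ K₂) :
    PhiMap K₁ K₂ (PsiMap K₁ K₂ y) = y := by
  obtain ⟨dd, q⟩ := y
  obtain ⟨r₁, hr₁, k₂, hk₂, hfact, heq⟩ := PhiMap_eq K₁ K₂ (PsiMap K₁ K₂ ⟨dd, q⟩)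
  set g := Quotient.out q with hg
  have hx1 : (PsiMap K₁ K₂ ⟨dd, q⟩).1 = (QuotientGroup.mk g : G ⧸ K₁) := rfl
  have hx2 : (PsiMap K₁ K₂ ⟨dd, q⟩).2
      = (QuotientGroup.mk (g * Quotient.out dd) : G ⧸ K₂) := rfl
  set g₁ := Quotient.out (PsiMap K₁ K₂ ⟨dd, q⟩).1 with hgg₁
  set g₂ := Quotient.out (PsiMap K₁ K₂ ⟨dd, q⟩).2 with hgg₂
  have ham : g₁⁻¹ * g ∈ K₁ := by
    apply QuotientGroup.eq.mp
    rw [hgg₁, QuotientGroup.out_eq', hx1]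
  have hbm : g₂⁻¹ * (g * Quotient.out dd) ∈ K₂ := by
    apply QuotientGroup.eq.mp
    rw [hgg₂, QuotientGroup.out_eq', hx2]
  set a := g₁⁻¹ * g with ha
  set b := g₂⁻¹ * (g * Quotient.out dd) with hb
  have hg₁e : g₁ = g * a⁻¹ := by rw [ha]; group
  have hg₂e : g₂ = g * Quotient.out dd * b⁻¹ := by rw [hb]; group
  have hprod : g₁⁻¹ * g₂ = a * Quotient.out dd * b⁻¹ := by rw [hg₁e, hg₂e]; group
  have hdd : DoubleCoset.mk K₁ K₂ (g₁⁻¹ * g₂) = dd := by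
    rw [hprod, doset_mk_eq ham (K₂.inv_mem hbm), DoubleCoset.out_eq']
  rw [heq]
  rw [hdd, hprod] at hfact
  -- hfact : a * Quotient.out dd * b⁻¹ = r₁ * Quotient.out dd * k₂
  have hr₁e : r₁ = a * Quotient.out dd * b⁻¹ * k₂⁻¹ * (Quotient.out dd)⁻¹ := by
    rw [hfact]; group
  have hmem : (g₁ * r₁)⁻¹ * g
      ∈ K₁ ⊓ conjS (Quotient.out (DoubleCoset.mk K₁ K₂ (g₁⁻¹ * g₂))) K₂ := by
    rw [hdd]
    refine Subgroup.mem_inf.mpr ⟨?_, ?_⟩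
    · have he : (g₁ * r₁)⁻¹ * g = r₁⁻¹ * a := by rw [hg₁e]; group
      rw [he]
      exact K₁.mul_mem (K₁.inv_mem hr₁) ham
    · rw [mem_conjS]
      have he : (Quotient.out dd)⁻¹ * ((g₁ * r₁)⁻¹ * g) * Quotient.out dd = k₂ * b := by
        rw [hg₁e, hr₁e]; group
      rw [he]
      exact K₂.mul_mem hk₂ hbm
  have hfin := TgtT_mk_eq (K₁ := K₁) (K₂ := K₂) hdd (g₁ * r₁) g hmem
  rw [hfin]
  have : (QuotientGroup.mk g : G ⧸ (K₁ ⊓ conjS (Quotient.out dd) K₂)) = q := by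
    rw [hg, QuotientGroup.out_eq']
  rw [this]

/-- `Φ` commutes with the translation `hK ↦ g⁻¹hK` (for every `g : G`). -/
theorem PhiMap_translate (K₁ K₂ : Subgroup G) (g : G) (x : (G ⧸ K₁) × (G ⧸ K₂)) :
    PhiMap K₁ K₂ (g⁻¹ • x.1, g⁻¹ • x.2)
      = ⟨(PhiMap K₁ K₂ x).1, g⁻¹ • (PhiMap K₁ K₂ x).2⟩ := by
  obtain ⟨r₁, hr₁, k₂, hk₂, hfact, heq⟩ := PhiMap_eq K₁ K₂ x
  obtain ⟨r₁', hr₁', k₂', hk₂', hfact', heq'⟩ := PhiMap_eq K₁ K₂ (g⁻¹ • x.1, g⁻¹ • x.2)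
  set g₁ := Quotient.out x.1 with hg₁
  set g₂ := Quotient.out x.2 with hg₂
  set d := DoubleCoset.mk K₁ K₂ (g₁⁻¹ * g₂) with hd
  set g₁' := Quotient.out ((g⁻¹ • x.1, g⁻¹ • x.2)).1 with hgg₁
  set g₂' := Quotient.out ((g⁻¹ • x.1, g⁻¹ • x.2)).2 with hgg₂
  have ham : g₁'⁻¹ * (g⁻¹ * g₁) ∈ K₁ := by
    apply QuotientGroup.eq.mp
    rw [hgg₁, QuotientGroup.out_eq']
    show g⁻¹ • x.1 = _
    rw [← QuotientGroup.out_eq' x.1, ← hg₁, MulAction.Quotient.smul_mk]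
    rfl
  have hbm : g₂'⁻¹ * (g⁻¹ * g₂) ∈ K₂ := by
    apply QuotientGroup.eq.mp
    rw [hgg₂, QuotientGroup.out_eq']
    show g⁻¹ • x.2 = _
    rw [← QuotientGroup.out_eq' x.2, ← hg₂, MulAction.Quotient.smul_mk]
    rfl
  set a := g₁'⁻¹ * (g⁻¹ * g₁) with ha
  set b := g₂'⁻¹ * (g⁻¹ * g₂) with hb
  have hg₁'e : g₁' = g⁻¹ * g₁ * a⁻¹ := by rw [ha]; group
  have hg₂'e : g₂' = g⁻¹ * g₂ * b⁻¹ := by rw [hb]; group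
  have hprod : g₁'⁻¹ * g₂' = a * (g₁⁻¹ * g₂) * b⁻¹ := by rw [hg₁'e, hg₂'e]; group
  have hdd : DoubleCoset.mk K₁ K₂ (g₁'⁻¹ * g₂') = d := by
    rw [hprod, doset_mk_eq ham (K₂.inv_mem hbm), hd]
  rw [heq, heq']
  rw [hdd] at hfact'
  rw [hprod, hfact] at hfact'
  -- hfact' : a * (r₁ * out d * k₂) * b⁻¹ = r₁' * out d * k₂'
  have hr₁'e : r₁' = a * (r₁ * Quotient.out d * k₂) * b⁻¹ * k₂'⁻¹ * (Quotient.out d)⁻¹ := by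
    rw [hfact']; group
  show _ = (⟨d, g⁻¹ • (QuotientGroup.mk (g₁ * r₁) : G ⧸ (K₁ ⊓ conjS (Quotient.out d) K₂))⟩
    : TgtT K₁ K₂)
  have hsm : (g⁻¹ • (QuotientGroup.mk (g₁ * r₁) : G ⧸ (K₁ ⊓ conjS (Quotient.out d) K₂)))
      = QuotientGroup.mk (g⁻¹ * (g₁ * r₁)) := MulAction.Quotient.smul_mk _ _ _
  rw [hsm]
  have hmem : (g₁' * r₁')⁻¹ * (g⁻¹ * (g₁ * r₁))
      ∈ K₁ ⊓ conjS (Quotient.out (DoubleCoset.mk K₁ K₂ (g₁'⁻¹ * g₂'))) K₂ := by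
    rw [hdd]
    refine Subgroup.mem_inf.mpr ⟨?_, ?_⟩
    · have he : (g₁' * r₁')⁻¹ * (g⁻¹ * (g₁ * r₁)) = r₁'⁻¹ * a * r₁ := by rw [hg₁'e]; group
      rw [he]
      exact K₁.mul_mem (K₁.mul_mem (K₁.inv_mem hr₁') ham) hr₁
    · rw [mem_conjS]
      have he : (Quotient.out d)⁻¹ * ((g₁' * r₁')⁻¹ * (g⁻¹ * (g₁ * r₁))) * Quotient.out d
          = k₂' * b * k₂⁻¹ := by
        rw [hg₁'e, hr₁'e]; group
      rw [he]
      exact K₂.mul_mem (K₂.mul_mem hk₂' hbm) (K₂.inv_mem hk₂)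
  exact TgtT_mk_eq hdd _ _ hmem

end Aux2

section Aux3

variable {U K₁ K₂ : Subgroup G} {t s₁ s₂ : L}

theorem PhiMap_mapsTo (F : SubLatticeFamily G L) (hs₁ : s₁ ∈ F.S K₁) (hs₂ : s₂ ∈ F.S K₂) :
    Set.MapsTo (PhiMap K₁ K₂)
      {x : (G ⧸ K₁) × (G ⧸ K₂) | homCond U t K₁ s₁ x.1 ∧ homCond U t K₂ s₂ x.2}
      {y : TgtT K₁ K₂ |
        homCond U t (K₁ ⊓ conjS (Quotient.out y.1) K₂)
          (s₁ ⊓ (Quotient.out y.1) • s₂) y.2} := by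
  rintro x ⟨hx1, hx2⟩
  obtain ⟨r₁, hr₁, k₂, hk₂, hfact, heq⟩ := PhiMap_eq K₁ K₂ x
  rw [Set.mem_setOf_eq, heq]
  rw [homCond_out_iff F hs₁] at hx1
  rw [homCond_out_iff F hs₂] at hx2
  set g₁ := Quotient.out x.1 with hg₁
  set g₂ := Quotient.out x.2 with hg₂
  set d := DoubleCoset.mk K₁ K₂ (g₁⁻¹ * g₂) with hd
  set r := Quotient.out d with hr
  have hg₂e : g₂ = g₁ * (r₁ * r * k₂) := by rw [← hfact]; group
  have hgr : g₁ * r₁ * r = g₂ * k₂⁻¹ := by rw [hg₂e]; group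
  have e1 : conjS (g₁ * r₁) (K₁ ⊓ conjS r K₂) = conjS g₁ K₁ ⊓ conjS g₂ K₂ := by
    rw [conjS_inf, conjS_mul, hgr, ← conjS_mul g₂ k₂⁻¹ K₂, conjS_self (K₂.inv_mem hk₂),
      ← conjS_mul g₁ r₁ K₁, conjS_self hr₁]
  have e2 : (g₁ * r₁) • (s₁ ⊓ r • s₂) = g₁ • s₁ ⊓ g₂ • s₂ := by
    rw [FA.smul_inf F, ← mul_smul, mul_assoc, mul_smul g₁ r₁ s₁,
      F.invariant K₁ r₁ hr₁ s₁ hs₁, ← mul_assoc, hgr, mul_smul g₂ k₂⁻¹ s₂,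
      F.invariant K₂ k₂⁻¹ (K₂.inv_mem hk₂) s₂ hs₂]
  exact ⟨g₁ * r₁, rfl, e1 ▸ le_inf hx1.1 hx2.1, e2 ▸ le_inf hx1.2 hx2.2⟩

theorem PsiMap_mapsTo (F : SubLatticeFamily G L) :
    Set.MapsTo (PsiMap K₁ K₂)
      {y : TgtT K₁ K₂ |
        homCond U t (K₁ ⊓ conjS (Quotient.out y.1) K₂)
          (s₁ ⊓ (Quotient.out y.1) • s₂) y.2}
      {x : (G ⧸ K₁) × (G ⧸ K₂) | homCond U t K₁ s₁ x.1 ∧ homCond U t K₂ s₂ x.2} := by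
  rintro ⟨dd, q⟩ hy
  obtain ⟨g', hg', hU, ht⟩ := hy
  have h0 : g'⁻¹ * Quotient.out q ∈ K₁ ⊓ conjS (Quotient.out dd) K₂ := by
    apply QuotientGroup.eq.mp
    rw [hg', QuotientGroup.out_eq']
  obtain ⟨h01, h02⟩ := Subgroup.mem_inf.mp h0
  constructor
  · refine ⟨g', ?_, le_trans hU (conjS_mono _ inf_le_left),
      le_trans ht (F.smul_le _ _ _ inf_le_left)⟩
    exact QuotientGroup.eq.mpr h01
  · refine ⟨g' * Quotient.out dd, ?_, ?_, ?_⟩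
    · apply QuotientGroup.eq.mpr
      have he : (g' * Quotient.out dd)⁻¹ * (Quotient.out q * Quotient.out dd)
          = (Quotient.out dd)⁻¹ * (g'⁻¹ * Quotient.out q) * Quotient.out dd := by group
      rw [he]
      exact mem_conjS.mp h02
    · rw [← conjS_mul]
      exact le_trans hU (conjS_mono _ inf_le_right)
    · rw [mul_smul]
      exact le_trans ht (F.smul_le _ _ _ (inf_le_right.trans (le_of_eq rfl)))

theorem PhiMap_bijOn (F : SubLatticeFamily G L) (hs₁ : s₁ ∈ F.S K₁) (hs₂ : s₂ ∈ F.S K₂) :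
    Set.BijOn (PhiMap K₁ K₂)
      {x : (G ⧸ K₁) × (G ⧸ K₂) | homCond U t K₁ s₁ x.1 ∧ homCond U t K₂ s₂ x.2}
      {y : TgtT K₁ K₂ |
        homCond U t (K₁ ⊓ conjS (Quotient.out y.1) K₂)
          (s₁ ⊓ (Quotient.out y.1) • s₂) y.2} :=
  Set.InvOn.bijOn ⟨fun x _ => PsiMap_PhiMap K₁ K₂ x, fun y _ => PhiMap_PsiMap K₁ K₂ y⟩
    (PhiMap_mapsTo F hs₁ hs₂) (PsiMap_mapsTo F)

end Aux3

section Aux4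

variable {U : Subgroup G} {t : L}

/-- Right translation `gK ↦ gh⁻¹K'` on coset spaces. -/
def rtF {K : Subgroup G} (h : G) (K' : Subgroup G) (q : G ⧸ K) : G ⧸ K' :=
  QuotientGroup.mk (Quotient.out q * h⁻¹)

theorem rtF_mk {K K' : Subgroup G} {h : G} (hK : K' = conjS h K) (g : G) :
    rtF h K' (QuotientGroup.mk g : G ⧸ K) = QuotientGroup.mk (g * h⁻¹) := by
  apply QuotientGroup.eq.mpr
  have hc : (Quotient.out ((QuotientGroup.mk g) : G ⧸ K))⁻¹ * g ∈ K :=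
    QuotientGroup.eq.mp (QuotientGroup.out_eq' _)
  have he : (Quotient.out ((QuotientGroup.mk g) : G ⧸ K) * h⁻¹)⁻¹ * (g * h⁻¹)
      = h * ((Quotient.out ((QuotientGroup.mk g) : G ⧸ K))⁻¹ * g) * h⁻¹ := by group
  rw [he, hK, mem_conjS]
  have he2 : h⁻¹ * (h * ((Quotient.out ((QuotientGroup.mk g) : G ⧸ K))⁻¹ * g) * h⁻¹) * h
      = (Quotient.out ((QuotientGroup.mk g) : G ⧸ K))⁻¹ * g := by group
  rw [he2]
  exact hc

theorem rtF_smul {K K' : Subgroup G} {h : G} (hK : K' = conjS h K) (n : G) (q : G ⧸ K) :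
    rtF h K' (n • q) = n • rtF h K' q := by
  conv_lhs => rw [← QuotientGroup.out_eq' q]
  conv_rhs => rw [← QuotientGroup.out_eq' q]
  rw [MulAction.Quotient.smul_mk, rtF_mk hK, rtF_mk hK, MulAction.Quotient.smul_mk]
  congr 1
  simp only [smul_eq_mul, mul_assoc]

/-- The translation equivalence between hom-sets, `gK ↦ gh⁻¹(ʰK)`. -/
def trEquiv (F : SubLatticeFamily G L) (U : Subgroup G) (t : L) {K K' : Subgroup G}
    {s s' : L} (h : G) (hK : K' = conjS h K) (hs : s' = h • s) :
    HomSet U t K s ≃ HomSet U t K' s' where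
  toFun x := ⟨rtF h K' x.1, by
    obtain ⟨g, hg, hU, ht⟩ := x.2
    refine ⟨g * h⁻¹, ?_, ?_, ?_⟩
    · rw [← hg, rtF_mk hK]
    · rw [hK, conjS_mul]
      have he : g * h⁻¹ * h = g := by group
      rw [he]; exact hU
    · rw [hs, smul_smul]
      have he : g * h⁻¹ * h = g := by group
      rw [he]; exact ht⟩
  invFun y := ⟨rtF h⁻¹ K y.1, by
    obtain ⟨g, hg, hU, ht⟩ := y.2
    have hK' : K = conjS h⁻¹ K' := by rw [hK, conjS_mul, inv_mul_cancel, conjS_one]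
    refine ⟨g * h, ?_, ?_, ?_⟩
    · rw [← hg, rtF_mk hK', inv_inv]
    · have he : conjS (g * h) K = conjS g K' := by rw [← conjS_mul, ← hK]
      rw [he]; exact hU
    · have he : (g * h) • s = g • s' := by rw [hs, mul_smul]
      rw [he]; exact ht⟩
  left_inv x := by
    apply Subtype.ext
    show rtF h⁻¹ K (rtF h K' x.1) = x.1
    have hK' : K = conjS h⁻¹ K' := by rw [hK, conjS_mul, inv_mul_cancel, conjS_one]
    conv_lhs => rw [← QuotientGroup.out_eq' x.1]
    rw [rtF_mk hK, rtF_mk hK']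
    conv_rhs => rw [← QuotientGroup.out_eq' x.1]
    congr 1
    group
  right_inv y := by
    apply Subtype.ext
    show rtF h K' (rtF h⁻¹ K y.1) = y.1
    have hK' : K = conjS h⁻¹ K' := by rw [hK, conjS_mul, inv_mul_cancel, conjS_one]
    conv_lhs => rw [← QuotientGroup.out_eq' y.1]
    rw [rtF_mk hK', rtF_mk hK]
    conv_rhs => rw [← QuotientGroup.out_eq' y.1]
    congr 1
    group

theorem trEquiv_fst (F : SubLatticeFamily G L) (U : Subgroup G) (t : L) {K K' : Subgroup G}
    {s s' : L} (h : G) (hK : K' = conjS h K) (hs : s' = h • s) (x : HomSet U t K s) :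
    ((trEquiv F U t h hK hs) x).1 = rtF h K' x.1 := rfl

/-- `homCond` is insensitive to truncating `s` by `F.top K`. -/
theorem homCond_trunc (F : SubLatticeFamily G L) (hUt : t ∈ F.S U) (K : Subgroup G) (s : L)
    (q : G ⧸ K) :
    homCond U t K s q ↔ homCond U t K (s ⊓ F.top K) q := by
  constructor
  · rintro ⟨g, hg, hU, ht⟩
    refine ⟨g, hg, hU, ?_⟩
    rw [FA.smul_inf F]
    refine le_inf ht ?_
    calc t ≤ F.top U := F.le_top U t hUt
    _ ≤ F.top (conjS g K) := F.top_mono hU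
    _ = g • F.top K := top_conjS F g K
  · rintro ⟨g, hg, hU, ht⟩
    exact ⟨g, hg, hU, le_trans ht (F.smul_le g _ _ inf_le_left)⟩

/-- A subtype of a sigma type whose condition depends on both components. -/
def sigmaSubtypeEquiv {ι : Type*} {X : ι → Type*} (p : ∀ i, X i → Prop) :
    {z : Σ i, X i // p z.1 z.2} ≃ Σ i, {v : X i // p i v} where
  toFun z := ⟨z.1.1, z.1.2, z.2⟩
  invFun w := ⟨⟨w.1, w.2.1⟩, w.2.2⟩
  left_inv z := rfl
  right_inv w := rfl

/-- Product of subtypes as a subtype of the product. -/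
def prodSubtypeEquiv {α β : Type*} {p : α → Prop} {q : β → Prop} :
    ({a // p a} × {b // q b}) ≃ {c : α × β // p c.1 ∧ q c.2} where
  toFun z := ⟨(z.1.1, z.2.1), z.1.2, z.2.2⟩
  invFun z := (⟨z.1.1, z.2.1⟩, ⟨z.1.2, z.2.2⟩)
  left_inv z := rfl
  right_inv z := rfl

/-- The equivalence given by `Φ`. -/
def phiEquiv (F : SubLatticeFamily G L) {K₁ K₂ : Subgroup G} {s₁ s₂ : L}
    (hs₁ : s₁ ∈ F.S K₁) (hs₂ : s₂ ∈ F.S K₂) :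
    {x : (G ⧸ K₁) × (G ⧸ K₂) // homCond U t K₁ s₁ x.1 ∧ homCond U t K₂ s₂ x.2}
      ≃ {y : TgtT K₁ K₂ // homCond U t (K₁ ⊓ conjS (Quotient.out y.1) K₂)
          (s₁ ⊓ (Quotient.out y.1) • s₂) y.2} where
  toFun z := ⟨PhiMap K₁ K₂ z.1, PhiMap_mapsTo F hs₁ hs₂ z.2⟩
  invFun z := ⟨PsiMap K₁ K₂ z.1, PsiMap_mapsTo F z.2⟩
  left_inv z := Subtype.ext (PsiMap_PhiMap K₁ K₂ z.1)
  right_inv z := Subtype.ext (PhiMap_PsiMap K₁ K₂ z.1)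

end Aux4

section Aux5

variable {U : Subgroup G} {t : L}

/-- Membership of the product pair in `S(G, M_L)`. -/
theorem prodPairL_memS (F : SubLatticeFamily G L) (h : G) {x y : Subgroup G × L}
    (hx : x.2 ∈ F.S x.1) (hy : y.2 ∈ F.S y.1) : memS F ⊤ (prodPairL F h x y) := by
  refine ⟨le_top, ?_⟩
  show (x.2 ⊓ h • y.2) ⊓ F.top (x.1 ⊓ conjS h y.1) ∈ F.S (x.1 ⊓ conjS h y.1)
  have h1 : x.2 ⊓ F.top (x.1 ⊓ conjS h y.1) ∈ F.S (x.1 ⊓ conjS h y.1) :=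
    F.res_mem inf_le_left x.2 hx
  have h2 : (h • y.2) ⊓ F.top (x.1 ⊓ conjS h y.1) ∈ F.S (x.1 ⊓ conjS h y.1) :=
    F.res_mem inf_le_right _ (smul_mem_S F h hy)
  have h3 := F.inf_mem _ h1 h2
  have he : (x.2 ⊓ F.top (x.1 ⊓ conjS h y.1)) ⊓ ((h • y.2) ⊓ F.top (x.1 ⊓ conjS h y.1))
      = (x.2 ⊓ h • y.2) ⊓ F.top (x.1 ⊓ conjS h y.1) := by
    rw [inf_inf_inf_comm, inf_idem]
  rwa [he] at h3

/-- Evaluation of `clsSumL` at a pair in `S(G, M_L)`: it picks out the value at the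
unique representative in the orbit. -/
theorem clsSum_eval [Finite G] [Finite L] (F : SubLatticeFamily G L)
    (R : RepsL F (⊤ : Subgroup G)) {A : Type*} [AddCommMonoid A]
    (z : Subgroup G × L) (hz : memS F ⊤ z) :
    ∃ (k : ↥R.R) (c : G), dotL c z = ↑k ∧ ∀ (v : ↥R.R → A), clsSumL R.R ⊤ v z = v k := by
  obtain ⟨y₀, ⟨hy₀R, hy₀orb⟩, huniq⟩ := R.complete z hz
  obtain ⟨c, -, hc⟩ := hy₀orb
  refine ⟨⟨y₀, hy₀R⟩, c, hc, fun v => ?_⟩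
  unfold clsSumL coordAtL
  have hfin : Finite ↥R.R := by
    have : Finite (Subgroup G × L) := inferInstance
    exact Subtype.finite
  have hstep : ∀ k : ↥R.R, (∑ᶠ (_ : ∃ h ∈ (⊤ : Subgroup G), dotL h z = ↑k), v k)
      = if (∃ h ∈ (⊤ : Subgroup G), dotL h z = ↑k) then v k else 0 := fun k => finsum_eq_if
  rw [finsum_congr hstep]
  have hone : ∀ k : ↥R.R, k ≠ ⟨y₀, hy₀R⟩ →
      (if (∃ h ∈ (⊤ : Subgroup G), dotL h z = ↑k) then v k else 0) = 0 := by
    intro k hk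
    rw [if_neg]
    intro hcon
    exact hk (Subtype.ext (huniq ↑k ⟨k.2, hcon⟩))
  rw [finsum_eq_single _ _ hone, if_pos ⟨c, Subgroup.mem_top c, hc⟩]

/-- Fintype structure on a sigma type. -/
def sigmaFt {ι : Type*} [Fintype ι] {X : ι → Type*} (f : ∀ i, Fintype (X i)) :
    Fintype (Σ i, X i) := by
  letI := f; exact inferInstance

/-- The action on a sigma type, componentwise. -/
def sigmaAct {W : Type*} [Monoid W] {ι : Type*} {X : ι → Type*}
    (a : ∀ i, MulAction W (X i)) : MulAction W (Σ i, X i) where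
  smul w z := ⟨z.1, aSmul (a z.1) w z.2⟩
  one_smul z := by
    show (⟨z.1, aSmul (a z.1) 1 z.2⟩ : Σ i, X i) = z
    have : aSmul (a z.1) 1 z.2 = z.2 := (a z.1).one_smul z.2
    rw [this]
  mul_smul w w' z := by
    show (⟨z.1, aSmul (a z.1) (w * w') z.2⟩ : Σ i, X i)
      = ⟨z.1, aSmul (a z.1) w (aSmul (a z.1) w' z.2)⟩
    have : aSmul (a z.1) (w * w') z.2 = aSmul (a z.1) w (aSmul (a z.1) w' z.2) :=
      (a z.1).mul_smul w w' z.2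
    rw [this]

theorem sigmaAct_smul {W : Type*} [Monoid W] {ι : Type*} {X : ι → Type*}
    (a : ∀ i, MulAction W (X i)) (w : W) (z : Σ i, X i) :
    aSmul (sigmaAct a) w z = ⟨z.1, aSmul (a z.1) w z.2⟩ := rfl

/-- The equivalence between the two models of the double coset space. -/
def dosetTopEquiv (K₁ K₂ : Subgroup G) :
    DoubleCoset.Quotient (↑(K₁.subgroupOf (⊤ : Subgroup G)) : Set ↥(⊤ : Subgroup G))
        (↑(K₂.subgroupOf (⊤ : Subgroup G)) : Set ↥(⊤ : Subgroup G))
      ≃ DoubleCoset.Quotient (K₁ : Set G) (K₂ : Set G) :=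
  Quotient.congr (Subgroup.topEquiv.toEquiv) (by
    intro a b
    rw [show ((DoubleCoset.setoid (↑(K₁.subgroupOf (⊤ : Subgroup G)))
        (↑(K₂.subgroupOf (⊤ : Subgroup G)))) a b)
      ↔ ∃ x ∈ K₁.subgroupOf ⊤, ∃ y ∈ K₂.subgroupOf ⊤, b = x * a * y from DoubleCoset.rel_iff]
    rw [show ((DoubleCoset.setoid (↑K₁ : Set G) (↑K₂ : Set G)) (Subgroup.topEquiv.toEquiv a)
        (Subgroup.topEquiv.toEquiv b))
      ↔ ∃ x ∈ K₁, ∃ y ∈ K₂, (Subgroup.topEquiv.toEquiv b) = x *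
        (Subgroup.topEquiv.toEquiv a) * y from DoubleCoset.rel_iff]
    constructor
    · rintro ⟨x, hx, y, hy, hb⟩
      refine ⟨↑x, hx, ↑y, hy, ?_⟩
      rw [hb]
      rfl
    · rintro ⟨x, hx, y, hy, hb⟩
      refine ⟨⟨x, Subgroup.mem_top x⟩, hx, ⟨y, Subgroup.mem_top y⟩, hy, ?_⟩
      apply Subtype.ext
      exact hb)

theorem dosetTopEquiv_mk (K₁ K₂ : Subgroup G) (w : ↥(⊤ : Subgroup G)) :
    dosetTopEquiv K₁ K₂ (DoubleCoset.mk _ _ w) = DoubleCoset.mk K₁ K₂ ↑w := rfl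

/-- The coercion of the `out` of the corresponding double coset lies in the same
double coset. -/
theorem dosetTopEquiv_out (K₁ K₂ : Subgroup G) (d : DoubleCoset.Quotient (K₁ : Set G) K₂) :
    ∃ α ∈ K₁, ∃ β ∈ K₂,
      ((Quotient.out ((dosetTopEquiv K₁ K₂).symm d) : ↥(⊤ : Subgroup G)) : G)
        = α * Quotient.out d * β := by
  set q := (dosetTopEquiv K₁ K₂).symm d with hq
  have h1 : DoubleCoset.mk K₁ K₂ ((Quotient.out q : ↥(⊤ : Subgroup G)) : G) = d := by
    rw [← dosetTopEquiv_mk K₁ K₂ (Quotient.out q)]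
    rw [show DoubleCoset.mk (K₁.subgroupOf ⊤) (K₂.subgroupOf ⊤) (Quotient.out q) = q from
      DoubleCoset.out_eq' _ _ q]
    rw [hq, Equiv.apply_symm_apply]
  have h2 : DoubleCoset.mk K₁ K₂ (Quotient.out d) = d := DoubleCoset.out_eq' _ _ d
  have h3 := h2.trans h1.symm
  obtain ⟨α, hα, β, hβ, hfact⟩ := (DoubleCoset.eq K₁ K₂ _ _).mp h3
  exact ⟨α, hα, β, hβ, hfact⟩

end Aux5

section Aux6

variable {W : Type*} [Monoid W] {B : Type*} [AddCommGroup B]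

theorem cls_of_isEmpty (cls : ∀ X : Type u, Fintype X → MulAction W X → B)
    (hiso : ∀ (X Y : Type u) (fX : Fintype X) (fY : Fintype Y)
      (aX : MulAction W X) (aY : MulAction W Y),
      (∃ f : X ≃ Y, ∀ (w : W) (x : X), f (aSmul aX w x) = aSmul aY w (f x)) →
        cls X fX aX = cls Y fY aY)
    (hadd : ∀ (X Y : Type u) (fX : Fintype X) (fY : Fintype Y)
      (aX : MulAction W X) (aY : MulAction W Y),
      cls (X ⊕ Y) (sumFt fX fY) (sumAct aX aY) = cls X fX aX + cls Y fY aY)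
    (X : Type u) (fX : Fintype X) (aX : MulAction W X) (hE : IsEmpty X) :
    cls X fX aX = 0 := by
  letI := hE
  have e : (X ⊕ X) ≃ X := Equiv.equivOfIsEmpty _ _
  have h1 : cls (X ⊕ X) (sumFt fX fX) (sumAct aX aX) = cls X fX aX :=
    hiso _ _ _ _ _ _ ⟨e, fun w z => isEmptyElim z⟩
  have h2 := hadd X X fX fX aX aX
  exact left_eq_add.mp (h1.symm.trans h2)

/-- Splitting off the `0`-th component of a sigma type over `Fin (n+1)`. -/
def finSigmaSplit {n : ℕ} (X : Fin (n + 1) → Type u) :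
    (Σ i, X i) ≃ (X 0 ⊕ Σ j : Fin n, X j.succ) where
  toFun z := Fin.cases (motive := fun i => X i → (X 0 ⊕ Σ j : Fin n, X j.succ))
    (fun v => Sum.inl v) (fun j v => Sum.inr ⟨j, v⟩) z.1 z.2
  invFun w := Sum.elim (fun v => ⟨0, v⟩) (fun z => ⟨z.1.succ, z.2⟩) w
  left_inv := by
    rintro ⟨i, v⟩
    induction i using Fin.cases with
    | zero => simp
    | succ j => simp
  right_inv := by
    rintro (v | ⟨j, v⟩) <;> simp

theorem cls_sigma_fin (cls : ∀ X : Type u, Fintype X → MulAction W X → B)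
    (hiso : ∀ (X Y : Type u) (fX : Fintype X) (fY : Fintype Y)
      (aX : MulAction W X) (aY : MulAction W Y),
      (∃ f : X ≃ Y, ∀ (w : W) (x : X), f (aSmul aX w x) = aSmul aY w (f x)) →
        cls X fX aX = cls Y fY aY)
    (hadd : ∀ (X Y : Type u) (fX : Fintype X) (fY : Fintype Y)
      (aX : MulAction W X) (aY : MulAction W Y),
      cls (X ⊕ Y) (sumFt fX fY) (sumAct aX aY) = cls X fX aX + cls Y fY aY) :
    ∀ (n : ℕ) (X : Fin n → Type u) (f : ∀ i, Fintype (X i)) (a : ∀ i, MulAction W (X i)),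
      cls (Σ i, X i) (sigmaFt f) (sigmaAct a) = ∑ i, cls (X i) (f i) (a i) := by
  intro n
  induction n with
  | zero =>
    intro X f a
    have hE : IsEmpty (Σ i, X i) := ⟨fun z => z.1.elim0⟩
    rw [cls_of_isEmpty cls hiso hadd _ _ _ hE]
    simp
  | succ n ih =>
    intro X f a
    have hEq : ∀ (w : W) (z : Σ i, X i),
        (finSigmaSplit X) (aSmul (sigmaAct a) w z)
          = aSmul (sumAct (a 0) (sigmaAct (fun j : Fin n => a j.succ))) w
            ((finSigmaSplit X) z) := by
      rintro w ⟨i, v⟩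
      induction i using Fin.cases with
      | zero =>
        show (finSigmaSplit X) ⟨0, aSmul (a 0) w v⟩ = _
        simp only [finSigmaSplit, Equiv.coe_fn_mk, Fin.cases_zero]
        rfl
      | succ j =>
        show (finSigmaSplit X) ⟨j.succ, aSmul (a j.succ) w v⟩ = _
        simp only [finSigmaSplit, Equiv.coe_fn_mk, Fin.cases_succ]
        rfl
    have h1 : cls (Σ i, X i) (sigmaFt f) (sigmaAct a)
        = cls (X 0 ⊕ Σ j : Fin n, X j.succ)
            (sumFt (f 0) (sigmaFt (fun j : Fin n => f j.succ)))
            (sumAct (a 0) (sigmaAct (fun j : Fin n => a j.succ))) :=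
      hiso _ _ _ _ _ _ ⟨finSigmaSplit X, hEq⟩
    rw [h1, hadd, ih (fun j : Fin n => X j.succ) (fun j : Fin n => f j.succ)
      (fun j : Fin n => a j.succ), Fin.sum_univ_succ]

theorem cls_sigma (cls : ∀ X : Type u, Fintype X → MulAction W X → B)
    (hiso : ∀ (X Y : Type u) (fX : Fintype X) (fY : Fintype Y)
      (aX : MulAction W X) (aY : MulAction W Y),
      (∃ f : X ≃ Y, ∀ (w : W) (x : X), f (aSmul aX w x) = aSmul aY w (f x)) →
        cls X fX aX = cls Y fY aY)
    (hadd : ∀ (X Y : Type u) (fX : Fintype X) (fY : Fintype Y)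
      (aX : MulAction W X) (aY : MulAction W Y),
      cls (X ⊕ Y) (sumFt fX fY) (sumAct aX aY) = cls X fX aX + cls Y fY aY)
    {ι : Type u} [Fintype ι] (Y : ι → Type u) (f : ∀ i, Fintype (Y i))
    (a : ∀ i, MulAction W (Y i)) :
    cls (Σ i, Y i) (sigmaFt f) (sigmaAct a) = ∑ i, cls (Y i) (f i) (a i) := by
  classical
  set σ := Fintype.equivFin ι with hσ
  have hEq : ∀ (w : W) (z : Σ j : Fin (Fintype.card ι), Y (σ.symm j)),
      (Equiv.sigmaCongrLeft (β := Y) σ.symm)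
          (aSmul (sigmaAct (fun j => a (σ.symm j))) w z)
        = aSmul (sigmaAct a) w ((Equiv.sigmaCongrLeft (β := Y) σ.symm) z) := by
    rintro w ⟨j, v⟩
    rfl
  have h1 : cls (Σ j : Fin (Fintype.card ι), Y (σ.symm j))
      (sigmaFt (fun j => f (σ.symm j))) (sigmaAct (fun j => a (σ.symm j)))
      = cls (Σ i, Y i) (sigmaFt f) (sigmaAct a) :=
    hiso _ _ _ _ _ _ ⟨Equiv.sigmaCongrLeft (β := Y) σ.symm, hEq⟩
  rw [← h1, cls_sigma_fin cls hiso hadd]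
  exact Equiv.sum_comp σ.symm (fun i => cls (Y i) (f i) (a i))

end Aux6

section Aux7

/-- Subtype equivalence from a pointwise iff. -/
def subtypeIffEquiv {α : Type*} {p q : α → Prop} (h : ∀ x, p x ↔ q x) :
    {x // p x} ≃ {x // q x} where
  toFun x := ⟨x.1, (h x.1).mp x.2⟩
  invFun x := ⟨x.1, (h x.1).mpr x.2⟩
  left_inv x := rfl
  right_inv x := rfl

end Aux7

/-- `Φ` is a well-defined bijection from `Hom₁ × Hom₂` onto
`⊔_{K₁rK₂} {g(K₁∩ʳK₂) : U ≤ ᵍ(K₁∩ʳK₂), t ≤ ᵍ(s₁ ∧ ʳs₂)}`, equivariant for the action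
of `W_G(U,t)` given by `hK ↦ g⁻¹hK`; consequently the assignment
`ω : [(G/K)_s] ↦ [{gK ∈ G/K : U ≤ ᵍK, t ≤ ᵍs}]` extends to a ring homomorphism from
`Ω(G, M_L)` to the Burnside ring of `W_G(U,t)`.  Here `Ω(G, M_L)` is presented as a
commutative ring `A` free on the classes `[(G/K)_s]`, `(K,s) ∈ R(G,M_L)`, with the
double coset multiplication, and the Burnside ring of `W = W_G(U,t)` as a commutative
ring `B` together with an assignment `cls` of classes of finite `W`-sets which is
additive on disjoint unions, multiplicative on cartesian products, invariant under
equivariant bijections, and takes the value `1` on the one-point `W`-set. -/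
theorem lattice_hom_bijection_and_ring_hom [Finite G] [Finite L]
    (R : RepsL F (⊤ : Subgroup G))
    (U K₁ K₂ : Subgroup G) (t s₁ s₂ : L)
    (hUt : memS F ⊤ (U, t)) (h1 : memS F ⊤ (K₁, s₁)) (h2 : memS F ⊤ (K₂, s₂))
    -- the lattice Burnside ring Ω(G, M_L)
    (A : Type*) [CommRing A] (e : ↥R.R → A)
    (hfree : LinearIndependent ℤ e)
    (hspan : Submodule.span ℤ (Set.range e) = ⊤)
    (hone : clsSumL R.R ⊤ e ((⊤ : Subgroup G), F.top ⊤) = 1)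
    (hmul : ∀ x y : ↥R.R, e x * e y =
      ∑ᶠ q : DoubleCoset.Quotient
          (↑(x.1.1.subgroupOf (⊤ : Subgroup G)) : Set ↥(⊤ : Subgroup G))
          (↑(y.1.1.subgroupOf (⊤ : Subgroup G)) : Set ↥(⊤ : Subgroup G)),
        clsSumL R.R ⊤ e
          (prodPairL F ((Quotient.out q : ↥(⊤ : Subgroup G)) : G) x.1 y.1))
    -- the Burnside ring of W_G(U,t)
    (B : Type*) [CommRing B]
    (cls : ∀ X : Type u, Fintype X → MulAction (WQ U t) X → B)
    (hcls_iso : ∀ (X Y : Type u) (fX : Fintype X) (fY : Fintype Y)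
      (aX : MulAction (WQ U t) X) (aY : MulAction (WQ U t) Y),
      (∃ f : X ≃ Y, ∀ (w : WQ U t) (x : X), f (aSmul aX w x) = aSmul aY w (f x)) →
        cls X fX aX = cls Y fY aY)
    (hcls_add : ∀ (X Y : Type u) (fX : Fintype X) (fY : Fintype Y)
      (aX : MulAction (WQ U t) X) (aY : MulAction (WQ U t) Y),
      cls (X ⊕ Y) (sumFt fX fY) (sumAct aX aY) = cls X fX aX + cls Y fY aY)
    (hcls_mul : ∀ (X Y : Type u) (fX : Fintype X) (fY : Fintype Y)
      (aX : MulAction (WQ U t) X) (aY : MulAction (WQ U t) Y),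
      cls (X × Y) (prodFt fX fY) (prodAct aX aY) = cls X fX aX * cls Y fY aY)
    (hcls_one : cls PUnit punitFt (punitAct _) = 1)
    -- the action of W_G(U,t) on the hom-sets, induced by  gU • hK = g⁻¹hK
    (inst : ∀ k : ↥R.R, MulAction (WQ U t) (HomSet U t k.1.1 k.1.2))
    (hact : ∀ (k : ↥R.R) (n : ↥(NL (⊤ : Subgroup G) (U, t)))
      (x : HomSet U t k.1.1 k.1.2),
      (aSmul (inst k) (QuotientGroup.mk n) x).1 = ((n : G))⁻¹ • x.1) :
    -- Φ is a well-defined bijection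
    Set.BijOn (PhiMap K₁ K₂)
      {x : (G ⧸ K₁) × (G ⧸ K₂) | homCond U t K₁ s₁ x.1 ∧ homCond U t K₂ s₂ x.2}
      {y : TgtT K₁ K₂ |
        homCond U t (K₁ ⊓ conjS (Quotient.out y.1) K₂)
          (s₁ ⊓ (Quotient.out y.1) • s₂) y.2} ∧
    -- Φ is equivariant for the W_G(U,t)-action  hK ↦ g⁻¹hK
    (∀ g : G, g ∈ NL (⊤ : Subgroup G) (U, t) →
      ∀ x : (G ⧸ K₁) × (G ⧸ K₂),
        (homCond U t K₁ s₁ x.1 ∧ homCond U t K₂ s₂ x.2) →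
        PhiMap K₁ K₂ (g⁻¹ • x.1, g⁻¹ • x.2)
          = ⟨(PhiMap K₁ K₂ x).1, g⁻¹ • (PhiMap K₁ K₂ x).2⟩) ∧
    -- consequently ω extends to a ring homomorphism
    (∃ f : A →+* B, ∀ k : ↥R.R,
      f (e k) = cls (HomSet U t k.1.1 k.1.2) (Fintype.ofFinite _) (inst k)) := by
  classical
  refine ⟨PhiMap_bijOn F h1.2 h2.2, fun g hg x hx => PhiMap_translate K₁ K₂ g x, ?_⟩
  have hsp : ⊤ ≤ Submodule.span ℤ (Set.range e) := le_of_eq hspan.symm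
  let b : Module.Basis ↥R.R ℤ A := Module.Basis.mk hfree hsp
  let φ : A →ₗ[ℤ] B :=
    b.constr ℕ (fun k => cls (HomSet U t k.1.1 k.1.2) (Fintype.ofFinite _) (inst k))
  have hφ : ∀ k : ↥R.R, φ (e k)
      = cls (HomSet U t k.1.1 k.1.2) (Fintype.ofFinite _) (inst k) := by
    intro k
    have hbk : (b k : A) = e k := Module.Basis.mk_apply hfree hsp k
    rw [← hbk]
    exact Module.Basis.constr_basis b ℕ _ k
  have hφcls : ∀ (z : Subgroup G × L), memS F ⊤ z →
      ∃ (k : ↥R.R) (c : G), dotL c z = ↑k ∧ φ (clsSumL R.R ⊤ e z)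
        = cls (HomSet U t k.1.1 k.1.2) (Fintype.ofFinite _) (inst k) := by
    intro z hz
    obtain ⟨k, c, hdot, hval⟩ := clsSum_eval (A := A) F R z hz
    exact ⟨k, c, hdot, by rw [hval e, hφ]⟩
  -- `φ` maps `1` to `1`
  have hφ1 : φ (1 : A) = 1 := by
    obtain ⟨k, c, hdot, hval⟩ := hφcls ((⊤ : Subgroup G), F.top ⊤) ⟨le_top, F.top_mem ⊤⟩
    rw [← hone, hval]
    have hk1 : k.1.1 = (⊤ : Subgroup G) := by
      have h := congrArg Prod.fst hdot
      rw [← h]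
      show conjS c ⊤ = ⊤
      ext z
      simp [mem_conjS]
    have hk2 : k.1.2 = F.top ⊤ := by
      have h := congrArg Prod.snd hdot
      rw [← h]
      exact F.invariant ⊤ c (Subgroup.mem_top c) _ (F.top_mem ⊤)
    haveI hss : Subsingleton (G ⧸ k.1.1) := by
      rw [hk1]; exact QuotientGroup.subsingleton_quotient_top
    haveI : Subsingleton (HomSet U t k.1.1 k.1.2) :=
      ⟨fun a b2 => Subtype.ext (Subsingleton.elim _ _)⟩
    have hx0 : homCond U t k.1.1 k.1.2 (QuotientGroup.mk 1) := by
      refine ⟨1, rfl, ?_, ?_⟩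
      · rw [conjS_one, hk1]; exact le_top
      · rw [one_smul, hk2]
        exact le_trans (F.le_top U t hUt.2) (F.top_mono le_top)
    haveI hu : Unique (HomSet U t k.1.1 k.1.2) := uniqueOfSubsingleton ⟨_, hx0⟩
    rw [← hcls_one]
    exact hcls_iso _ _ _ _ _ _ ⟨Equiv.equivPUnit _, fun w z => Subsingleton.elim _ _⟩
  -- multiplicativity on basis elements
  have hkey : ∀ x y : ↥R.R, φ (e x * e y) = φ (e x) * φ (e y) := by
    intro x y
    have hx := R.subset x.1 x.2
    have hy := R.subset y.1 y.2
    haveI hDQfin : Finite (DoubleCoset.Quotient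
        (↑(x.1.1.subgroupOf (⊤ : Subgroup G)) : Set ↥(⊤ : Subgroup G))
        (↑(y.1.1.subgroupOf (⊤ : Subgroup G)) : Set ↥(⊤ : Subgroup G))) :=
      Quotient.finite _
    letI instDQ : Fintype (DoubleCoset.Quotient
        (↑(x.1.1.subgroupOf (⊤ : Subgroup G)) : Set ↥(⊤ : Subgroup G))
        (↑(y.1.1.subgroupOf (⊤ : Subgroup G)) : Set ↥(⊤ : Subgroup G))) :=
      Fintype.ofFinite _
    have hterm : ∀ q : DoubleCoset.Quotient
        (↑(x.1.1.subgroupOf (⊤ : Subgroup G)) : Set ↥(⊤ : Subgroup G))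
        (↑(y.1.1.subgroupOf (⊤ : Subgroup G)) : Set ↥(⊤ : Subgroup G)), memS F ⊤
        (prodPairL F ((Quotient.out q : ↥(⊤ : Subgroup G)) : G) x.1 y.1) :=
      fun q => prodPairL_memS F _ hx.2 hy.2
    choose kq cq hdot hφval using fun q => hφcls _ (hterm q)
    -- it remains to produce the equivariant bijection
    let σ := (dosetTopEquiv x.1.1 y.1.1).symm
    choose αf hα βf hβ hfac using fun d => dosetTopEquiv_out x.1.1 y.1.1 d
    have hKz : ∀ d : DoubleCoset.Quotient (x.1.1 : Set G) y.1.1,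
        (prodPairL F ((Quotient.out (σ d) : ↥(⊤ : Subgroup G)) : G) x.1 y.1).1
          = conjS (αf d) (x.1.1 ⊓ conjS (Quotient.out d) y.1.1) := by
      intro d
      show x.1.1 ⊓ conjS ((Quotient.out (σ d) : ↥(⊤ : Subgroup G)) : G) y.1.1 = _
      rw [hfac d, ← conjS_mul (αf d * Quotient.out d) (βf d), conjS_self (hβ d),
        ← conjS_mul, conjS_inf]
      rw [conjS_self (hα d)]
    have hsz : ∀ d : DoubleCoset.Quotient (x.1.1 : Set G) y.1.1,
        (prodPairL F ((Quotient.out (σ d) : ↥(⊤ : Subgroup G)) : G) x.1 y.1).2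
          = (αf d) • ((x.1.2 ⊓ (Quotient.out d) • y.1.2)
              ⊓ F.top (x.1.1 ⊓ conjS (Quotient.out d) y.1.1)) := by
      intro d
      show (x.1.2 ⊓ ((Quotient.out (σ d) : ↥(⊤ : Subgroup G)) : G) • y.1.2)
          ⊓ F.top (prodPairL F ((Quotient.out (σ d) : ↥(⊤ : Subgroup G)) : G) x.1 y.1).1 = _
      rw [hKz d, top_conjS, FA.smul_inf F, FA.smul_inf F]
      congr 1
      rw [hfac d, mul_smul, mul_smul, F.invariant y.1.1 (βf d) (hβ d) y.1.2 hy.2]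
      congr 1
      exact (F.invariant x.1.1 (αf d) (hα d) x.1.2 hx.2).symm
    have hKk : ∀ q, (kq q).1.1 = conjS (cq q)
        (prodPairL F ((Quotient.out q : ↥(⊤ : Subgroup G)) : G) x.1 y.1).1 :=
      fun q => (congrArg Prod.fst (hdot q)).symm
    have hsk : ∀ q, (kq q).1.2 = (cq q) •
        (prodPairL F ((Quotient.out q : ↥(⊤ : Subgroup G)) : G) x.1 y.1).2 :=
      fun q => (congrArg Prod.snd (hdot q)).symm
    let Ffib : ∀ d : DoubleCoset.Quotient (x.1.1 : Set G) y.1.1,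
        HomSet U t (x.1.1 ⊓ conjS (Quotient.out d) y.1.1)
            (x.1.2 ⊓ (Quotient.out d) • y.1.2)
          ≃ HomSet U t (kq (σ d)).1.1 (kq (σ d)).1.2 :=
      fun d => (subtypeIffEquiv (fun v => homCond_trunc F hUt.2 _ _ v)).trans
        ((trEquiv F U t (αf d) (hKz d) (hsz d)).trans
          (trEquiv F U t (cq (σ d)) (hKk (σ d)) (hsk (σ d))))
    let E : (HomSet U t x.1.1 x.1.2 × HomSet U t y.1.1 y.1.2)
        ≃ Σ q, HomSet U t (kq q).1.1 (kq q).1.2 :=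
      prodSubtypeEquiv.trans ((phiEquiv F hx.2 hy.2).trans
        ((sigmaSubtypeEquiv _).trans
          ((Equiv.sigmaCongrRight Ffib).trans (Equiv.sigmaCongrLeft (β := fun q => HomSet U t (kq q).1.1 (kq q).1.2) σ))))
    let Emap : ∀ (Y : TgtT x.1.1 y.1.1),
        homCond U t (x.1.1 ⊓ conjS (Quotient.out Y.1) y.1.1)
          (x.1.2 ⊓ (Quotient.out Y.1) • y.1.2) Y.2
        → (Σ q, HomSet U t (kq q).1.1 (kq q).1.2) :=
      fun Y hY => ⟨σ Y.1, Ffib Y.1 ⟨Y.2, hY⟩⟩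
    have hEapp : ∀ z : HomSet U t x.1.1 x.1.2 × HomSet U t y.1.1 y.1.2,
        E z = Emap (PhiMap x.1.1 y.1.1 (z.1.1, z.2.1))
          (PhiMap_mapsTo F hx.2 hy.2 ⟨z.1.2, z.2.2⟩) := fun z => rfl
    have hEmap_congr : ∀ (Y Y' : TgtT x.1.1 y.1.1) (hYY : Y = Y') (hY hY'),
        Emap Y hY = Emap Y' hY' := by
      rintro Y Y' rfl hY hY'
      rfl
    have hEq : ∀ (w : WQ U t) (p : HomSet U t x.1.1 x.1.2 × HomSet U t y.1.1 y.1.2),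
        E (aSmul (prodAct (inst x) (inst y)) w p)
          = aSmul (sigmaAct (fun q => inst (kq q))) w (E p) := by
      intro w p
      rw [← QuotientGroup.out_eq' w]
      set n := Quotient.out w with hn
      have hc1 : (aSmul (inst x) (QuotientGroup.mk n) p.1).1 = ((n : G))⁻¹ • p.1.1 :=
        hact x n p.1
      have hc2 : (aSmul (inst y) (QuotientGroup.mk n) p.2).1 = ((n : G))⁻¹ • p.2.1 :=
        hact y n p.2
      have hsmul_p : aSmul (prodAct (inst x) (inst y)) (QuotientGroup.mk n) p
          = (aSmul (inst x) (QuotientGroup.mk n) p.1,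
             aSmul (inst y) (QuotientGroup.mk n) p.2) := rfl
      rw [hEapp, hEapp p]
      have h_pair : ((aSmul (prodAct (inst x) (inst y)) (QuotientGroup.mk n) p).1.1,
          (aSmul (prodAct (inst x) (inst y)) (QuotientGroup.mk n) p).2.1)
          = (((n : G))⁻¹ • p.1.1, ((n : G))⁻¹ • p.2.1) := by
        rw [hsmul_p]
        exact Prod.ext hc1 hc2
      have hΦ : PhiMap x.1.1 y.1.1
          ((aSmul (prodAct (inst x) (inst y)) (QuotientGroup.mk n) p).1.1,
           (aSmul (prodAct (inst x) (inst y)) (QuotientGroup.mk n) p).2.1)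
          = ⟨(PhiMap x.1.1 y.1.1 (p.1.1, p.2.1)).1,
             ((n : G))⁻¹ • (PhiMap x.1.1 y.1.1 (p.1.1, p.2.1)).2⟩ := by
        rw [h_pair]
        exact PhiMap_translate x.1.1 y.1.1 (n : G) (p.1.1, p.2.1)
      have hcond : homCond U t
          (x.1.1 ⊓ conjS (Quotient.out (⟨(PhiMap x.1.1 y.1.1 (p.1.1, p.2.1)).1,
              ((n : G))⁻¹ • (PhiMap x.1.1 y.1.1 (p.1.1, p.2.1)).2⟩
            : TgtT x.1.1 y.1.1).1) y.1.1)
          (x.1.2 ⊓ (Quotient.out (⟨(PhiMap x.1.1 y.1.1 (p.1.1, p.2.1)).1,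
              ((n : G))⁻¹ • (PhiMap x.1.1 y.1.1 (p.1.1, p.2.1)).2⟩
            : TgtT x.1.1 y.1.1).1) • y.1.2)
          (⟨(PhiMap x.1.1 y.1.1 (p.1.1, p.2.1)).1,
              ((n : G))⁻¹ • (PhiMap x.1.1 y.1.1 (p.1.1, p.2.1)).2⟩
            : TgtT x.1.1 y.1.1).2 := by
        rw [← hΦ]
        exact PhiMap_mapsTo F hx.2 hy.2
          ⟨(aSmul (prodAct (inst x) (inst y)) (QuotientGroup.mk n) p).1.2,
           (aSmul (prodAct (inst x) (inst y)) (QuotientGroup.mk n) p).2.2⟩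
      rw [hEmap_congr _ _ hΦ _ hcond]
      -- both sides now have the same first component
      show (⟨σ (PhiMap x.1.1 y.1.1 (p.1.1, p.2.1)).1, _⟩
          : Σ q, HomSet U t (kq q).1.1 (kq q).1.2) = _
      rw [sigmaAct_smul]
      apply congrArg (Sigma.mk (σ (PhiMap x.1.1 y.1.1 (p.1.1, p.2.1)).1))
      apply Subtype.ext
      rw [hact (kq (σ (PhiMap x.1.1 y.1.1 (p.1.1, p.2.1)).1)) n]
      show rtF (cq (σ (PhiMap x.1.1 y.1.1 (p.1.1, p.2.1)).1)) _
          (rtF (αf (PhiMap x.1.1 y.1.1 (p.1.1, p.2.1)).1) _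
            (((n : G))⁻¹ • (PhiMap x.1.1 y.1.1 (p.1.1, p.2.1)).2))
        = ((n : G))⁻¹ • (rtF (cq (σ (PhiMap x.1.1 y.1.1 (p.1.1, p.2.1)).1)) _
          (rtF (αf (PhiMap x.1.1 y.1.1 (p.1.1, p.2.1)).1) _
            (PhiMap x.1.1 y.1.1 (p.1.1, p.2.1)).2))
      rw [rtF_smul (hKz (PhiMap x.1.1 y.1.1 (p.1.1, p.2.1)).1),
        rtF_smul (hKk (σ (PhiMap x.1.1 y.1.1 (p.1.1, p.2.1)).1))]
    calc φ (e x * e y)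
        = φ (∑ᶠ q : DoubleCoset.Quotient
        (↑(x.1.1.subgroupOf (⊤ : Subgroup G)) : Set ↥(⊤ : Subgroup G))
        (↑(y.1.1.subgroupOf (⊤ : Subgroup G)) : Set ↥(⊤ : Subgroup G)),
            clsSumL R.R ⊤ e
              (prodPairL F ((Quotient.out q : ↥(⊤ : Subgroup G)) : G) x.1 y.1)) := by
          rw [hmul x y]
      _ = ∑ᶠ q : DoubleCoset.Quotient
        (↑(x.1.1.subgroupOf (⊤ : Subgroup G)) : Set ↥(⊤ : Subgroup G))
        (↑(y.1.1.subgroupOf (⊤ : Subgroup G)) : Set ↥(⊤ : Subgroup G)),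
            φ (clsSumL R.R ⊤ e
              (prodPairL F ((Quotient.out q : ↥(⊤ : Subgroup G)) : G) x.1 y.1)) :=
          φ.toAddMonoidHom.map_finsum (Set.toFinite _)
      _ = ∑ᶠ q : DoubleCoset.Quotient
        (↑(x.1.1.subgroupOf (⊤ : Subgroup G)) : Set ↥(⊤ : Subgroup G))
        (↑(y.1.1.subgroupOf (⊤ : Subgroup G)) : Set ↥(⊤ : Subgroup G)),
            cls (HomSet U t (kq q).1.1 (kq q).1.2) (Fintype.ofFinite _) (inst (kq q)) :=
          finsum_congr (fun q => hφval q)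
      _ = cls (Σ q : DoubleCoset.Quotient
        (↑(x.1.1.subgroupOf (⊤ : Subgroup G)) : Set ↥(⊤ : Subgroup G))
        (↑(y.1.1.subgroupOf (⊤ : Subgroup G)) : Set ↥(⊤ : Subgroup G)),
            HomSet U t (kq q).1.1 (kq q).1.2) (sigmaFt (fun q => Fintype.ofFinite _))
            (sigmaAct (fun q => inst (kq q))) := by
          rw [finsum_eq_sum_of_fintype]
          exact (cls_sigma cls hcls_iso hcls_add _ _ _).symm
      _ = cls (HomSet U t x.1.1 x.1.2 × HomSet U t y.1.1 y.1.2)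
            (prodFt (Fintype.ofFinite _) (Fintype.ofFinite _))
            (prodAct (inst x) (inst y)) := (hcls_iso _ _ _ _ _ _ ⟨E, hEq⟩).symm
      _ = φ (e x) * φ (e y) := by
          rw [hφ x, hφ y]
          exact hcls_mul _ _ _ _ _ _
  -- assemble the ring homomorphism
  have hM : ((LinearMap.mul ℤ A).compr₂ φ) = (LinearMap.mul ℤ B).compl₁₂ φ φ := by
    apply b.ext; intro i; apply b.ext; intro j
    have hbi : (b i : A) = e i := Module.Basis.mk_apply hfree hsp i
    have hbj : (b j : A) = e j := Module.Basis.mk_apply hfree hsp j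
    simp only [LinearMap.compr₂_apply, LinearMap.compl₁₂_apply, LinearMap.mul_apply', hbi, hbj]
    exact hkey i j
  have hmul' : ∀ a a' : A, φ (a * a') = φ a * φ a' := by
    intro a a'
    have h := LinearMap.congr_fun (LinearMap.congr_fun hM a) a'
    simpa [LinearMap.compr₂_apply, LinearMap.compl₁₂_apply, LinearMap.mul_apply'] using h
  let fMon : A →* B :=
    { toFun := fun a => φ a
      map_one' := hφ1
      map_mul' := hmul' }
  exact ⟨RingHom.mk' fMon (fun a a' => map_add φ a a'), fun k => hφ k⟩

end
end LB
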